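/- Let B, κ, η, t̄ be real numbers with B > 1, κ ≥ 0, 0 ≤ η ≤ 1/2, t̄ ≥ 0, and κ·t̄ < 1. Let μ⋆, m : [0, t̄] → ℝ be continuous functions satisfying, for every s ∈ [0, t̄], (1 − η)·(1 − κ·s) ≤ μ⋆(s) ≤ (1 + η)·(1 − κ·s) and 0 ≤ m(s) ≤ (1 + η)·κ. Then ∫₀^{t̄} m(s)·μ⋆(s)^{−B} ds ≤ ((1 + η)/(1 − η))^B · (B − 1)^{−1} · μ⋆(t̄)^{1−B}. -/

import Mathlib

open MeasureTheory

/-- The borderline top-order time-integral estimate: if `μ⋆` decays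
approximately linearly like `1 − κ·s` (up to a factor `1 ± η`) and `0 ≤ m ≤ (1+η)·κ`, then
for `B > 1`, `∫₀^{t̄} m·μ⋆^{−B} ≤ ((1+η)/(1−η))^B·(B−1)⁻¹·μ⋆(t̄)^{1−B}`. -/
theorem borderline_time_integral_estimate
    (B κ η tbar : ℝ) (hB : 1 < B) (hκ : 0 ≤ κ) (hη0 : 0 ≤ η) (hη : η ≤ 1 / 2)
    (htbar : 0 ≤ tbar) (hκt : κ * tbar < 1)
    (μstar m : ℝ → ℝ)
    (hμcont : ContinuousOn μstar (Set.Icc 0 tbar))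
    (hmcont : ContinuousOn m (Set.Icc 0 tbar))
    (hμlb : ∀ s ∈ Set.Icc (0:ℝ) tbar, (1 - η) * (1 - κ * s) ≤ μstar s)
    (hμub : ∀ s ∈ Set.Icc (0:ℝ) tbar, μstar s ≤ (1 + η) * (1 - κ * s))
    (hm0 : ∀ s ∈ Set.Icc (0:ℝ) tbar, 0 ≤ m s)
    (hm1 : ∀ s ∈ Set.Icc (0:ℝ) tbar, m s ≤ (1 + η) * κ) :
    (∫ s in (0:ℝ)..tbar, m s * μstar s ^ (-B)) ≤
      ((1 + η) / (1 - η)) ^ B * (B - 1)⁻¹ * μstar tbar ^ (1 - B) := by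
  have hη1 : (0:ℝ) < 1 - η := by linarith
  have hb : (0:ℝ) < 1 + η := by linarith
  have hB1 : (0:ℝ) < B - 1 := by linarith
  have htmem : tbar ∈ Set.Icc (0:ℝ) tbar := Set.right_mem_Icc.mpr htbar
  have hptbar : (0:ℝ) < 1 - κ * tbar := by linarith
  have hp : ∀ s ∈ Set.Icc (0:ℝ) tbar, 0 < 1 - κ * s := by
    intro s hs
    have : κ * s ≤ κ * tbar := mul_le_mul_of_nonneg_left hs.2 hκ
    linarith
  have hμpos : ∀ s ∈ Set.Icc (0:ℝ) tbar, 0 < μstar s := fun s hs =>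
    lt_of_lt_of_le (mul_pos hη1 (hp s hs)) (hμlb s hs)
  have huIcc : Set.uIcc (0:ℝ) tbar = Set.Icc 0 tbar := Set.uIcc_of_le htbar
  have hRHS0 : 0 ≤ ((1 + η) / (1 - η)) ^ B * (B - 1)⁻¹ * μstar tbar ^ (1 - B) := by
    have h1 : 0 ≤ ((1 + η) / (1 - η)) ^ B :=
      Real.rpow_nonneg (div_nonneg hb.le hη1.le) _
    have h2 : 0 ≤ μstar tbar ^ (1 - B) := Real.rpow_nonneg (hμpos tbar htmem).le _
    exact mul_nonneg (mul_nonneg h1 (inv_nonneg.mpr hB1.le)) h2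
  rcases eq_or_lt_of_le hκ with hκ0 | hκpos
  · -- κ = 0 : m ≡ 0 on the interval, so the integral vanishes
    have hz : Set.EqOn (fun s => m s * μstar s ^ (-B)) (fun _ => (0:ℝ))
        (Set.uIcc (0:ℝ) tbar) := by
      intro s hs
      rw [huIcc] at hs
      have h1 := hm0 s hs
      have h2 := hm1 s hs
      have : m s = 0 := by nlinarith
      simp [this]
    rw [intervalIntegral.integral_congr hz]
    simpa using hRHS0
  · -- κ > 0
    -- pointwise bound
    have hle : ∀ s ∈ Set.Icc (0:ℝ) tbar,
        m s * μstar s ^ (-B) ≤ (1 + η) * κ * ((1 - η) * (1 - κ * s)) ^ (-B) := by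
      intro s hs
      have h1 : μstar s ^ (-B) ≤ ((1 - η) * (1 - κ * s)) ^ (-B) :=
        Real.rpow_le_rpow_of_nonpos (mul_pos hη1 (hp s hs)) (hμlb s hs) (by linarith)
      have h2 : 0 ≤ μstar s ^ (-B) := Real.rpow_nonneg (hμpos s hs).le _
      exact mul_le_mul (hm1 s hs) h1 h2 (by positivity)
    -- integrability
    have hfc : ContinuousOn (fun s => m s * μstar s ^ (-B)) (Set.Icc 0 tbar) :=
      hmcont.mul (hμcont.rpow_const fun s hs => Or.inl (ne_of_gt (hμpos s hs)))
    have hbasec : ContinuousOn (fun s : ℝ => (1 - η) * (1 - κ * s)) (Set.Icc 0 tbar) :=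
      (continuousOn_const.mul (continuousOn_const.sub
        ((continuous_mul_left κ).continuousOn)))
    have hgc : ContinuousOn
        (fun s : ℝ => (1 + η) * κ * ((1 - η) * (1 - κ * s)) ^ (-B)) (Set.Icc 0 tbar) :=
      continuousOn_const.mul (hbasec.rpow_const fun s hs =>
        Or.inl (ne_of_gt (mul_pos hη1 (hp s hs))))
    have hfint : IntervalIntegrable (fun s => m s * μstar s ^ (-B))
        MeasureTheory.volume 0 tbar := (huIcc ▸ hfc).intervalIntegrable
    have hgint : IntervalIntegrable
        (fun s : ℝ => (1 + η) * κ * ((1 - η) * (1 - κ * s)) ^ (-B))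
        MeasureTheory.volume 0 tbar := (huIcc ▸ hgc).intervalIntegrable
    have hmono := intervalIntegral.integral_mono_on htbar hfint hgint hle
    -- compute ∫ (1-κs)^(-B)
    have hqc : ContinuousOn (fun s : ℝ => (1 - κ * s) ^ (-B)) (Set.Icc 0 tbar) :=
      ((continuousOn_const.sub (continuous_mul_left κ).continuousOn).rpow_const
        fun s hs => Or.inl (ne_of_gt (hp s hs)))
    have hqint : IntervalIntegrable (fun s : ℝ => (1 - κ * s) ^ (-B))
        MeasureTheory.volume 0 tbar := (huIcc ▸ hqc).intervalIntegrable
    have hFTC : ∫ s in (0:ℝ)..tbar, (1 - κ * s) ^ (-B)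
        = ((1 - κ * tbar) ^ (1 - B) / (κ * (B - 1)))
          - ((1 - κ * 0) ^ (1 - B) / (κ * (B - 1))) := by
      refine intervalIntegral.integral_eq_sub_of_hasDerivAt
        (f := fun s => (1 - κ * s) ^ (1 - B) / (κ * (B - 1))) ?_ hqint
      intro x hx
      rw [huIcc] at hx
      have hd1 : HasDerivAt (fun s : ℝ => 1 - κ * s) (-κ) x := by
        simpa using ((hasDerivAt_id x).const_mul κ).const_sub 1
      have hd2 := (hd1.rpow_const (p := 1 - B) (Or.inl (ne_of_gt (hp x hx)))).div_const (κ * (B - 1))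
      refine hd2.congr_deriv ?_
      have hE : 1 - B - 1 = -B := by ring
      rw [hE]
      field_simp
      ring
    have hmr : ∀ s : ℝ, 0 < 1 - κ * s →
        ((1 - η) * (1 - κ * s)) ^ (-B) = (1 - η) ^ (-B) * (1 - κ * s) ^ (-B) :=
      fun s hs => Real.mul_rpow hη1.le hs.le
    have hgval : (∫ s in (0:ℝ)..tbar, (1 + η) * κ * ((1 - η) * (1 - κ * s)) ^ (-B))
        ≤ (1 + η) * (1 - η) ^ (-B) * (B - 1)⁻¹ * (1 - κ * tbar) ^ (1 - B) := by
      have hcongr : Set.EqOn (fun s : ℝ => (1 + η) * κ * ((1 - η) * (1 - κ * s)) ^ (-B))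
          (fun s : ℝ => ((1 + η) * κ * (1 - η) ^ (-B)) * (1 - κ * s) ^ (-B))
          (Set.uIcc (0:ℝ) tbar) := by
        intro s hs
        rw [huIcc] at hs
        simp only [hmr s (hp s hs)]
        ring
      rw [intervalIntegral.integral_congr hcongr, intervalIntegral.integral_const_mul,
        hFTC]
      have h10 : (1 : ℝ) - κ * 0 = 1 := by ring
      rw [h10, Real.one_rpow]
      have hP : 0 < (1 - κ * tbar) ^ (1 - B) := Real.rpow_pos_of_pos hptbar _
      have hA : 0 < (1 - η) ^ (-B) := Real.rpow_pos_of_pos hη1 _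
      have hden : 0 < κ * (B - 1) := mul_pos hκpos hB1
      rw [div_sub_div_same, ← mul_div_assoc, div_le_iff₀ hden]
      have hre : (1 + η) * (1 - η) ^ (-B) * (B - 1)⁻¹ * (1 - κ * tbar) ^ (1 - B)
          * (κ * (B - 1))
          = (1 + η) * (1 - η) ^ (-B) * (1 - κ * tbar) ^ (1 - B) * κ := by
        field_simp
      rw [hre]
      nlinarith [mul_pos (mul_pos hA hb) hκpos]
    -- final comparison with RHS
    have hfinal : (1 + η) * (1 - η) ^ (-B) * (B - 1)⁻¹ * (1 - κ * tbar) ^ (1 - B)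
        ≤ ((1 + η) / (1 - η)) ^ B * (B - 1)⁻¹ * μstar tbar ^ (1 - B) := by
      have h1 : ((1 + η) * (1 - κ * tbar)) ^ (1 - B) ≤ μstar tbar ^ (1 - B) :=
        Real.rpow_le_rpow_of_nonpos (hμpos tbar htmem) (hμub tbar htmem) (by linarith)
      have h2 : ((1 + η) * (1 - κ * tbar)) ^ (1 - B)
          = (1 + η) ^ (1 - B) * (1 - κ * tbar) ^ (1 - B) :=
        Real.mul_rpow hb.le hptbar.le
      have h3 : ((1 + η) / (1 - η)) ^ B = (1 + η) ^ B * (1 - η) ^ (-B) := by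
        rw [Real.div_rpow hb.le hη1.le, Real.rpow_neg hη1.le, div_eq_mul_inv]
      have h4 : (1 + η) ^ B * (1 + η) ^ (1 - B) = 1 + η := by
        rw [← Real.rpow_add hb]
        norm_num
      have h5 : 0 ≤ (1 - η) ^ (-B) * (B - 1)⁻¹ :=
        mul_nonneg (Real.rpow_nonneg hη1.le _) (inv_nonneg.mpr hB1.le)
      calc (1 + η) * (1 - η) ^ (-B) * (B - 1)⁻¹ * (1 - κ * tbar) ^ (1 - B)
          = ((1 - η) ^ (-B) * (B - 1)⁻¹) * ((1 + η) ^ B * ((1 + η) ^ (1 - B)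
            * (1 - κ * tbar) ^ (1 - B))) := by
              conv_lhs => rw [show (1 + η) = (1 + η) ^ B * (1 + η) ^ (1 - B) from h4.symm]
              ring
        _ = ((1 - η) ^ (-B) * (B - 1)⁻¹) * ((1 + η) ^ B
            * ((1 + η) * (1 - κ * tbar)) ^ (1 - B)) := by rw [h2]
        _ ≤ ((1 - η) ^ (-B) * (B - 1)⁻¹) * ((1 + η) ^ B * μstar tbar ^ (1 - B)) := by
            refine mul_le_mul_of_nonneg_left ?_ h5
            exact mul_le_mul_of_nonneg_left h1 (Real.rpow_nonneg hb.le _)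
        _ = ((1 + η) / (1 - η)) ^ B * (B - 1)⁻¹ * μstar tbar ^ (1 - B) := by
            rw [h3]; ring
    exact hmono.trans (hgval.trans hfinal)
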